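/- Triangle confinement lemma: let a, b, c be vertices of a triangle in counterclockwise order in a simple polygon P, and suppose there exists a point w ∈ H⁺(b,a) ∩ H⁻(c,b) that sees both a and c. Then every point v ∈ H⁺(b,a) that sees a and c but does not see b lies in H⁻(c,b). -/

import Mathlib

open Bornology in
/-- A simple polygon: the closed region bounded by a simple closed polygonal curve,
given by its cyclically ordered vertices. `carrier` consists of the polygonal curve
together with all bounded connected components of its complement. -/
structure SimplePolygon where
  n : ℕ
  three_le : 3 ≤ n
  vtx : Fin n → ℝ × ℝ
  inj : Function.Injective vtx
  adj : ∀ i : Fin n,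
    segment ℝ (vtx i) (vtx (finRotate n i)) ∩
      segment ℝ (vtx (finRotate n i)) (vtx (finRotate n (finRotate n i)))
    = {vtx (finRotate n i)}
  nonadj : ∀ i j : Fin n, j ≠ i → j ≠ finRotate n i → i ≠ finRotate n j →
    segment ℝ (vtx i) (vtx (finRotate n i)) ∩ segment ℝ (vtx j) (vtx (finRotate n j)) = ∅
  carrier : Set (ℝ × ℝ)
  carrier_def : carrier =
    {x : ℝ × ℝ |
      IsBounded (connectedComponentIn (⋃ i : Fin n, segment ℝ (vtx i) (vtx (finRotate n i)))ᶜ x)}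

/-- The visibility region of a point `v` in a simple polygon `P`. -/
def vis (P : SimplePolygon) (v : ℝ × ℝ) : Set (ℝ × ℝ) :=
  {x ∈ P.carrier | segment ℝ x v ⊆ P.carrier}

/-- The open half-plane to the left of the directed line from `p` through `q`. -/
def Hplus (p q : ℝ × ℝ) : Set (ℝ × ℝ) :=
  {x | 0 < (q.1 - p.1) * (x.2 - p.2) - (q.2 - p.2) * (x.1 - p.1)}

/-- The open half-plane to the right of the directed line from `p` through `q`. -/
def Hminus (p q : ℝ × ℝ) : Set (ℝ × ℝ) :=
  {x | (q.1 - p.1) * (x.2 - p.2) - (q.2 - p.2) * (x.1 - p.1) < 0}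

section Stmt8Aux

open Bornology Set

/-- Twice the signed area of the triangle `p q x`. -/
noncomputable def cr (p q x : ℝ × ℝ) : ℝ :=
  (q.1 - p.1) * (x.2 - p.2) - (q.2 - p.2) * (x.1 - p.1)

lemma cr_rot (p q r : ℝ × ℝ) : cr p q r = cr q r p := by unfold cr; ring

lemma cr_swap (p q x : ℝ × ℝ) : cr q p x = -cr p q x := by unfold cr; ring

lemma cr_swap23 (p q x : ℝ × ℝ) : cr p x q = -cr p q x := by unfold cr; ring

lemma cr_pp (p r : ℝ × ℝ) : cr p p r = 0 := by unfold cr; ring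

lemma cr_self1 (p q : ℝ × ℝ) : cr p q p = 0 := by unfold cr; ring

lemma cr_self2 (p q : ℝ × ℝ) : cr p q q = 0 := by unfold cr; ring

lemma cr_combo (p q u w : ℝ × ℝ) (t : ℝ) :
    cr p q ((1 - t) • u + t • w) = (1 - t) * cr p q u + t * cr p q w := by
  simp only [cr, Prod.fst_add, Prod.snd_add, Prod.smul_fst, Prod.smul_snd, smul_eq_mul]
  ring

lemma cr_quad (p q r d e x : ℝ × ℝ) :
    cr p q r * cr d e x =
      cr q r x * cr d e p + cr r p x * cr d e q + cr p q x * cr d e r := by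
  unfold cr; ring

lemma cr_coord1 (p q r x : ℝ × ℝ) :
    cr p q r * x.1 = cr q r x * p.1 + cr r p x * q.1 + cr p q x * r.1 := by
  unfold cr; ring

lemma cr_coord2 (p q r x : ℝ × ℝ) :
    cr p q r * x.2 = cr q r x * p.2 + cr r p x * q.2 + cr p q x * r.2 := by
  unfold cr; ring

lemma cr_sum (p q r x : ℝ × ℝ) :
    cr q r x + cr r p x + cr p q x = cr p q r := by
  unfold cr; ring

lemma continuous_cr (p q : ℝ × ℝ) : Continuous (cr p q) := by
  unfold cr; fun_prop

lemma combo_neg {X Y t : ℝ} (hX : X < 0) (hY : Y < 0) (h0 : 0 ≤ t) (h1 : t ≤ 1) :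
    (1 - t) * X + t * Y < 0 := by
  rcases eq_or_lt_of_le h0 with h | h
  · rw [← h]; norm_num; exact hX
  · nlinarith [mul_pos h (neg_pos.2 hY),
      mul_nonneg (by linarith : (0:ℝ) ≤ 1 - t) (neg_nonneg.2 hX.le)]

/-- The closed triangle with clockwise-oriented vertices `p q r`. -/
def T (p q r : ℝ × ℝ) : Set (ℝ × ℝ) :=
  {y | cr p q y ≤ 0 ∧ cr q r y ≤ 0 ∧ cr r p y ≤ 0}

lemma T_rot (p q r : ℝ × ℝ) : T p q r = T q r p := by
  ext y
  exact ⟨fun h => ⟨h.2.1, h.2.2, h.1⟩, fun h => ⟨h.2.2, h.1, h.2.1⟩⟩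

lemma T_closed (p q r : ℝ × ℝ) : IsClosed (T p q r) := by
  have h1 : IsClosed {y : ℝ × ℝ | cr p q y ≤ 0} :=
    isClosed_le (continuous_cr p q) continuous_const
  have h2 : IsClosed {y : ℝ × ℝ | cr q r y ≤ 0} :=
    isClosed_le (continuous_cr q r) continuous_const
  have h3 : IsClosed {y : ℝ × ℝ | cr r p y ≤ 0} :=
    isClosed_le (continuous_cr r p) continuous_const
  have : T p q r = {y : ℝ × ℝ | cr p q y ≤ 0} ∩ ({y | cr q r y ≤ 0} ∩ {y | cr r p y ≤ 0}) := by
    ext y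
    exact ⟨fun h => ⟨h.1, h.2.1, h.2.2⟩, fun h => ⟨h.1, h.2.1, h.2.2⟩⟩
  rw [this]; exact h1.inter (h2.inter h3)

lemma line_param {p q x : ℝ × ℝ} (hpq : p ≠ q) (h : cr p q x = 0) :
    ∃ t : ℝ, x = (1 - t) • p + t • q := by
  have hne : q.1 - p.1 ≠ 0 ∨ q.2 - p.2 ≠ 0 := by
    by_contra hc
    push_neg at hc
    exact hpq (Prod.ext (by linarith [hc.1]) (by linarith [hc.2])).symm
  unfold cr at h
  rcases hne with h1 | h2
  · refine ⟨(x.1 - p.1) / (q.1 - p.1), ?_⟩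
    apply Prod.ext
    · simp only [Prod.fst_add, Prod.smul_fst, smul_eq_mul]
      field_simp
      ring
    · simp only [Prod.snd_add, Prod.smul_snd, smul_eq_mul]
      field_simp
      nlinarith [h]
  · refine ⟨(x.2 - p.2) / (q.2 - p.2), ?_⟩
    apply Prod.ext
    · simp only [Prod.fst_add, Prod.smul_fst, smul_eq_mul]
      field_simp
      nlinarith [h]
    · simp only [Prod.snd_add, Prod.smul_snd, smul_eq_mul]
      field_simp
      ring

lemma T_edge {p q r y : ℝ × ℝ} (hD : cr p q r < 0) (hy : y ∈ T p q r)
    (h0 : cr p q y = 0) : y ∈ segment ℝ p q := by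
  have hpq : p ≠ q := by
    intro h; rw [h, cr_pp] at hD; linarith
  obtain ⟨t, ht⟩ := line_param hpq h0
  have e1 : cr q r y = (1 - t) * cr p q r := by
    rw [ht, cr_combo]
    rw [show cr q r p = cr p q r from by rw [cr_rot q r p, cr_rot r p q],
      show cr q r q = 0 from cr_self1 q r]
    ring
  have e2 : cr r p y = t * cr p q r := by
    rw [ht, cr_combo]
    rw [show cr r p p = 0 from cr_self2 r p,
      show cr r p q = cr p q r from cr_rot r p q]
    ring
  have ht1 : t ≤ 1 := by nlinarith [hy.2.1, e1]
  have ht0 : 0 ≤ t := by nlinarith [hy.2.2, e2]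
  exact ⟨1 - t, t, by linarith, ht0, by ring, ht.symm⟩

lemma T_frontier {p q r : ℝ × ℝ} (hD : cr p q r < 0) :
    frontier (T p q r) ⊆ segment ℝ p q ∪ segment ℝ q r ∪ segment ℝ r p := by
  intro y hy
  have hyT : y ∈ T p q r := by
    rw [← (T_closed p q r).closure_eq]; exact hy.1
  rcases eq_or_lt_of_le hyT.1 with h1 | h1
  · exact Or.inl (Or.inl (T_edge hD hyT h1))
  rcases eq_or_lt_of_le hyT.2.1 with h2 | h2
  · refine Or.inl (Or.inr (T_edge (p := q) (q := r) (r := p) ?_ ?_ h2))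
    · rw [← cr_rot]; exact hD
    · rw [← T_rot]; exact hyT
  rcases eq_or_lt_of_le hyT.2.2 with h3 | h3
  · refine Or.inr (T_edge (p := r) (q := p) (r := q) ?_ ?_ h3)
    · rw [cr_rot]; exact hD
    · rw [T_rot]; exact hyT
  · exfalso
    apply hy.2
    have hopen : IsOpen {z : ℝ × ℝ | cr p q z < 0 ∧ cr q r z < 0 ∧ cr r p z < 0} := by
      have o1 := isOpen_lt (continuous_cr p q) (continuous_const (y := (0:ℝ)))
      have o2 := isOpen_lt (continuous_cr q r) (continuous_const (y := (0:ℝ)))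
      have o3 := isOpen_lt (continuous_cr r p) (continuous_const (y := (0:ℝ)))
      have : {z : ℝ × ℝ | cr p q z < 0 ∧ cr q r z < 0 ∧ cr r p z < 0}
          = {z : ℝ × ℝ | cr p q z < 0} ∩ ({z | cr q r z < 0} ∩ {z | cr r p z < 0}) := by
        ext z; simp only [mem_setOf_eq, mem_inter_iff]
      rw [this]; exact o1.inter (o2.inter o3)
    exact interior_maximal
      (fun z hz => show z ∈ T p q r from ⟨le_of_lt hz.1, le_of_lt hz.2.1, le_of_lt hz.2.2⟩)
      hopen ⟨h1, h2, h3⟩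

lemma bound_aux {D w1 w2 w3 c1 c2 c3 z M : ℝ} (hD : D < 0)
    (h1 : w1 ≤ 0) (h2 : w2 ≤ 0) (h3 : w3 ≤ 0) (hsum : w1 + w2 + w3 = D)
    (hid : D * z = w1 * c1 + w2 * c2 + w3 * c3)
    (hc1 : |c1| ≤ M) (hc2 : |c2| ≤ M) (hc3 : |c3| ≤ M) : |z| ≤ M := by
  obtain ⟨hc1a, hc1b⟩ := abs_le.1 hc1
  obtain ⟨hc2a, hc2b⟩ := abs_le.1 hc2
  obtain ⟨hc3a, hc3b⟩ := abs_le.1 hc3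
  rw [abs_le]
  constructor
  · nlinarith [mul_nonneg (neg_nonneg.2 h1) (by linarith : (0:ℝ) ≤ c1 + M),
      mul_nonneg (neg_nonneg.2 h2) (by linarith : (0:ℝ) ≤ c2 + M),
      mul_nonneg (neg_nonneg.2 h3) (by linarith : (0:ℝ) ≤ c3 + M)]
  · nlinarith [mul_nonneg (neg_nonneg.2 h1) (by linarith : (0:ℝ) ≤ M - c1),
      mul_nonneg (neg_nonneg.2 h2) (by linarith : (0:ℝ) ≤ M - c2),
      mul_nonneg (neg_nonneg.2 h3) (by linarith : (0:ℝ) ≤ M - c3)]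

lemma T_bounded {p q r : ℝ × ℝ} (hD : cr p q r < 0) : IsBounded (T p q r) := by
  set M : ℝ := |p.1| + |p.2| + |q.1| + |q.2| + |r.1| + |r.2| with hM
  have habs : ∀ u : ℝ × ℝ, u = p ∨ u = q ∨ u = r → |u.1| ≤ M ∧ |u.2| ≤ M := by
    intro u hu
    have n1 := abs_nonneg p.1; have n2 := abs_nonneg p.2
    have n3 := abs_nonneg q.1; have n4 := abs_nonneg q.2
    have n5 := abs_nonneg r.1; have n6 := abs_nonneg r.2
    rcases hu with h | h | h <;> subst h <;> constructor <;> linarith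
  apply (Metric.isBounded_closedBall (x := (0 : ℝ × ℝ)) (r := M)).subset
  intro y hy
  have hb1 : |y.1| ≤ M :=
    bound_aux hD hy.2.1 hy.2.2 hy.1 (cr_sum p q r y) (cr_coord1 p q r y)
      (habs p (Or.inl rfl)).1 (habs q (Or.inr (Or.inl rfl))).1 (habs r (Or.inr (Or.inr rfl))).1
  have hb2 : |y.2| ≤ M :=
    bound_aux hD hy.2.1 hy.2.2 hy.1 (cr_sum p q r y) (cr_coord2 p q r y)
      (habs p (Or.inl rfl)).2 (habs q (Or.inr (Or.inl rfl))).2 (habs r (Or.inr (Or.inr rfl))).2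
  have hd : dist y (0 : ℝ × ℝ) = max |y.1| |y.2| := by
    simp [Prod.dist_eq, Real.dist_eq, Prod.norm_def, Real.norm_eq_abs]
  rw [Metric.mem_closedBall, hd]
  exact max_le hb1 hb2

/-- Any closed bounded set whose frontier lies in the polygon lies in the polygon. -/
lemma enclosed (P : SimplePolygon) {R K : Set (ℝ × ℝ)}
    (hRb : IsBounded R) (hfr : frontier R ⊆ K) (hK : K ⊆ P.carrier) :
    R ⊆ P.carrier := by
  intro x hx
  set Γ : Set (ℝ × ℝ) := ⋃ i : Fin P.n, segment ℝ (P.vtx i) (P.vtx (finRotate P.n i)) with hΓ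
  rw [P.carrier_def]
  show IsBounded (connectedComponentIn Γᶜ x)
  by_cases hxΓ : x ∈ Γᶜ
  swap
  · rw [connectedComponentIn_eq_empty hxΓ]
    exact Bornology.isBounded_empty
  by_contra hub
  set C := connectedComponentIn Γᶜ x with hC
  have hxC : x ∈ C := mem_connectedComponentIn hxΓ
  have hCK : ∀ y ∈ C, y ∉ P.carrier := by
    intro y hy hyc
    rw [P.carrier_def] at hyc
    simp only [Set.mem_setOf_eq] at hyc
    rw [← hΓ, ← connectedComponentIn_eq hy] at hyc
    exact hub hyc
  have hnsub : ¬ C ⊆ R := fun h => hub (hRb.subset h)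
  obtain ⟨z, hzC, hzR⟩ := Set.not_subset.mp hnsub
  have hpc : IsPreconnected C := isPreconnected_connectedComponentIn
  have hcov : C ⊆ interior R ∪ (closure R)ᶜ := by
    intro y hy
    by_cases h1 : y ∈ closure R
    · left
      by_contra h2
      exact hCK y hy (hK (hfr ⟨h1, h2⟩))
    · right; exact h1
  have hxint : x ∈ interior R := by
    by_contra h2
    exact hCK x hxC (hK (hfr ⟨subset_closure hx, h2⟩))
  have hzcl : z ∈ (closure R)ᶜ := by
    intro h1
    have : z ∈ frontier R := ⟨h1, fun h2 => hzR (interior_subset h2)⟩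
    exact hCK z hzC (hK (hfr this))
  obtain ⟨y, -, hyi, hyc⟩ := hpc (interior R) (closure R)ᶜ isOpen_interior
    isClosed_closure.isOpen_compl hcov ⟨x, hxC, hxint⟩ ⟨z, hzC, hzcl⟩
  exact hyc (subset_closure (interior_subset hyi))

end Stmt8Aux

/-- Triangle confinement lemma: if `a,b,c` are in counterclockwise order, and some point
`w ∈ H⁺(b,a) ∩ H⁻(c,b)` of `P` sees `a` and `c`, then every point `v ∈ H⁺(b,a)` of `P`
seeing `a` and `c` but not `b` lies in `H⁻(c,b)`. -/
theorem stmt8 (P : SimplePolygon) (a b c w : ℝ × ℝ)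
    (ha : a ∈ P.carrier) (hb : b ∈ P.carrier) (hc : c ∈ P.carrier) (hw : w ∈ P.carrier)
    (hccw : c ∈ Hplus a b)
    (hw1 : w ∈ Hplus b a) (hw2 : w ∈ Hminus c b)
    (hwa : segment ℝ w a ⊆ P.carrier) (hwc : segment ℝ w c ⊆ P.carrier) :
    ∀ v ∈ P.carrier, v ∈ Hplus b a →
      segment ℝ v a ⊆ P.carrier → segment ℝ v c ⊆ P.carrier →
      ¬ segment ℝ v b ⊆ P.carrier → v ∈ Hminus c b := by
  intro v hv hv1 hva hvc hvb
  by_contra hgoal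
  have hD0 : 0 < cr a b c := hccw
  have hv1' : 0 < cr b a v := hv1
  have hw1' : 0 < cr b a w := hw1
  have hw2' : cr c b w < 0 := hw2
  have hS : 0 ≤ cr c b v := le_of_not_gt hgoal
  -- basic sign facts
  have hDacb : cr a c b < 0 := by
    have e1 : cr c a b = cr a b c := cr_rot c a b
    have e2 : cr a c b = -cr c a b := cr_swap c a b
    linarith
  have hD : cr a c v < 0 := by
    have hs := cr_sum a b c v
    have e1 : cr b c v = -cr c b v := cr_swap c b v
    have e2 : cr a b v = -cr b a v := cr_swap b a v
    have e3 : cr a c v = -cr c a v := cr_swap c a v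
    linarith
  have hac : a ≠ c := by
    intro h
    rw [h] at hD0
    have := cr_self1 c b
    linarith
  rcases eq_or_lt_of_le hS with hS0 | hSpos
  · -- v, b, c collinear: b lies on segment v c
    have hcb : c ≠ b := by
      intro h
      rw [h] at hD0
      have := cr_self2 a b
      linarith
    obtain ⟨s, hs⟩ := line_param hcb hS0.symm
    have hval : cr b a v = (1 - s) * cr b a c := by
      rw [hs, cr_combo, cr_self1 b a]; ring
    have hbac : cr b a c = -cr a b c := cr_swap a b c
    have hs1 : 1 < s := by nlinarith
    have hbmem : b ∈ segment ℝ v c := by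
      refine ⟨1/s, (s-1)/s, by positivity,
        div_nonneg (by linarith) (by linarith), by field_simp; ring, ?_⟩
      rw [hs]
      apply Prod.ext <;>
        simp only [Prod.fst_add, Prod.snd_add, Prod.smul_fst, Prod.smul_snd, smul_eq_mul] <;>
        field_simp <;> ring
    have hsub : segment ℝ v b ⊆ segment ℝ v c :=
      (convex_segment v c).segment_subset (left_mem_segment ℝ v c) hbmem
    exact hvb fun y hy => hvc (hsub hy)
  · -- main case
    -- every point of segment v b lies in T a c v, strictly off the line a c,
    -- and weakly left of line c b
    have hseg : ∀ y ∈ segment ℝ v b, y ∈ T a c v ∧ cr a c y < 0 ∧ 0 ≤ cr c b y := by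
      intro y hy
      rw [segment_eq_image ℝ v b] at hy
      obtain ⟨t, ⟨ht0, ht1⟩, hyeq⟩ := hy
      replace hyeq : y = (1 - t) • v + t • b := hyeq.symm
      subst hyeq
      have e1 := cr_combo a c v b t
      have e2 := cr_combo c v v b t
      have e3 := cr_combo v a v b t
      have e4 := cr_combo c b v b t
      rw [cr_self2 c v] at e2
      rw [cr_self1 v a] at e3
      rw [cr_self2 c b] at e4
      have hcvb : cr c v b = -cr c b v := cr_swap23 c b v
      have hvab : cr v a b = cr a b v := cr_rot v a b
      have habv : cr a b v = -cr b a v := cr_swap b a v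
      have hacy : cr a c ((1-t) • v + t • b) < 0 := by
        rw [e1]; exact combo_neg hD hDacb ht0 ht1
      refine ⟨⟨hacy.le, ?_, ?_⟩, hacy, ?_⟩
      · rw [e2]; nlinarith
      · rw [e3]; nlinarith
      · rw [e4]; nlinarith
    rcases lt_trichotomy (cr a c w) 0 with hE | hE | hE
    · -- w strictly on the same side of line ac as v: R = closure (T a c v \ T a c w)
      set R : Set (ℝ × ℝ) := closure (T a c v \ T a c w) with hR
      have hsubT1 : R ⊆ T a c v := closure_minimal Set.diff_subset (T_closed a c v)
      have hRb : Bornology.IsBounded R := (T_bounded hD).subset hsubT1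
      set K : Set (ℝ × ℝ) :=
        segment ℝ w a ∪ segment ℝ w c ∪ segment ℝ v a ∪ segment ℝ v c with hKdef
      have hK : K ⊆ P.carrier := by
        rintro y (((h | h) | h) | h)
        exacts [hwa h, hwc h, hva h, hvc h]
      have hfr : frontier R ⊆ K := by
        intro x hx
        have hxR : x ∈ R := by
          have h := hx.1
          rwa [hR, closure_closure] at h
        have hxT1 : x ∈ T a c v := hsubT1 hxR
        rcases eq_or_lt_of_le hxT1.2.1 with h2 | h2
        · have hmem : x ∈ segment ℝ c v :=
            T_edge (p := c) (q := v) (r := a)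
              (by rw [← cr_rot a c v]; exact hD) (by rw [← T_rot a c v]; exact hxT1) h2
          exact Or.inr (segment_symm ℝ c v ▸ hmem)
        rcases eq_or_lt_of_le hxT1.2.2 with h3 | h3
        · have hmem : x ∈ segment ℝ v a :=
            T_edge (p := v) (q := a) (r := c)
              (by rw [cr_rot v a c]; exact hD)
              (by rw [T_rot v a c]; exact hxT1) h3
          exact Or.inl (Or.inr hmem)
        rcases eq_or_lt_of_le hxT1.1 with h1 | h1
        · -- x on segment a c
          have hxac : x ∈ segment ℝ a c := T_edge hD hxT1 h1
          rw [segment_eq_image ℝ a c] at hxac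
          obtain ⟨u, ⟨hu0, hu1⟩, hxeq⟩ := hxac
          replace hxeq : x = (1 - u) • a + u • c := hxeq.symm
          rcases eq_or_lt_of_le hu0 with h | h
          · have : x = a := by rw [hxeq, ← h]; norm_num
            exact Or.inl (Or.inr (this ▸ right_mem_segment ℝ v a))
          rcases eq_or_lt_of_le hu1 with h' | h'
          · have : x = c := by rw [hxeq, h']; norm_num
            exact Or.inr (this ▸ right_mem_segment ℝ v c)
          · exfalso
            have hcwa : cr c w a = cr a c w := (cr_rot a c w).symm
            have hwac : cr w a c = cr a c w := by rw [cr_rot w a c, cr_rot a c w]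
            have hval1 : cr c w x = (1 - u) * cr a c w := by
              rw [hxeq, cr_combo, cr_self1 c w, hcwa]; ring
            have hval2 : cr w a x = u * cr a c w := by
              rw [hxeq, cr_combo, cr_self2 w a, hwac]; ring
            have hopen : IsOpen {y : ℝ × ℝ | cr c w y < 0 ∧ cr w a y < 0} := by
              have o1 := isOpen_lt (continuous_cr c w) (continuous_const (y := (0:ℝ)))
              have o2 := isOpen_lt (continuous_cr w a) (continuous_const (y := (0:ℝ)))
              have : {y : ℝ × ℝ | cr c w y < 0 ∧ cr w a y < 0}
                  = {y : ℝ × ℝ | cr c w y < 0} ∩ {y | cr w a y < 0} := rfl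
              rw [this]; exact o1.inter o2
            have hxO : x ∈ {y : ℝ × ℝ | cr c w y < 0 ∧ cr w a y < 0} :=
              ⟨by rw [hval1]; nlinarith, by rw [hval2]; nlinarith⟩
            obtain ⟨y, hyO, hyD⟩ := mem_closure_iff.mp hxR _ hopen hxO
            exact hyD.2 ⟨hyD.1.1, hyO.1.le, hyO.2.le⟩
        · -- x strictly inside all T1 constraints
          by_cases hT2 : x ∈ T a c w
          · rcases eq_or_lt_of_le hT2.2.1 with g2 | g2
            · have hmem : x ∈ segment ℝ c w :=
                T_edge (p := c) (q := w) (r := a)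
                  (by rw [← cr_rot a c w]; exact hE) (by rw [← T_rot a c w]; exact hT2) g2
              exact Or.inl (Or.inl (Or.inr (segment_symm ℝ c w ▸ hmem)))
            rcases eq_or_lt_of_le hT2.2.2 with g3 | g3
            · have hmem : x ∈ segment ℝ w a :=
                T_edge (p := w) (q := a) (r := c)
                  (by rw [cr_rot w a c]; exact hE)
                  (by rw [T_rot w a c]; exact hT2) g3
              exact Or.inl (Or.inl (Or.inl hmem))
            · exfalso
              have hopen : IsOpen {y : ℝ × ℝ | cr a c y < 0 ∧ cr c w y < 0 ∧ cr w a y < 0} := by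
                have o1 := isOpen_lt (continuous_cr a c) (continuous_const (y := (0:ℝ)))
                have o2 := isOpen_lt (continuous_cr c w) (continuous_const (y := (0:ℝ)))
                have o3 := isOpen_lt (continuous_cr w a) (continuous_const (y := (0:ℝ)))
                have : {y : ℝ × ℝ | cr a c y < 0 ∧ cr c w y < 0 ∧ cr w a y < 0}
                    = {y : ℝ × ℝ | cr a c y < 0} ∩ ({y | cr c w y < 0} ∩ {y | cr w a y < 0}) := by
                  ext z; simp only [Set.mem_setOf_eq, Set.mem_inter_iff]
                rw [this]; exact o1.inter (o2.inter o3)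
              obtain ⟨y, hyO, hyD⟩ := mem_closure_iff.mp hxR _ hopen ⟨h1, g2, g3⟩
              exact hyD.2 ⟨hyO.1.le, hyO.2.1.le, hyO.2.2.le⟩
          · exfalso
            apply hx.2
            have hopen : IsOpen ({y : ℝ × ℝ | cr a c y < 0 ∧ cr c v y < 0 ∧ cr v a y < 0}
                ∩ (T a c w)ᶜ) := by
              have o1 := isOpen_lt (continuous_cr a c) (continuous_const (y := (0:ℝ)))
              have o2 := isOpen_lt (continuous_cr c v) (continuous_const (y := (0:ℝ)))
              have o3 := isOpen_lt (continuous_cr v a) (continuous_const (y := (0:ℝ)))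
              have he : {y : ℝ × ℝ | cr a c y < 0 ∧ cr c v y < 0 ∧ cr v a y < 0}
                  = {y : ℝ × ℝ | cr a c y < 0} ∩ ({y | cr c v y < 0} ∩ {y | cr v a y < 0}) := by
                ext z; simp only [Set.mem_setOf_eq, Set.mem_inter_iff]
              exact (he ▸ o1.inter (o2.inter o3)).inter (T_closed a c w).isOpen_compl
            exact interior_maximal
              (fun y hy => subset_closure (s := T a c v \ T a c w) ⟨⟨hy.1.1.le, hy.1.2.1.le, hy.1.2.2.le⟩, hy.2⟩)
              hopen ⟨⟨h1, h2, h3⟩, hT2⟩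
      have hRcar : R ⊆ P.carrier := enclosed P hRb hfr hK
      apply hvb
      intro y hy
      obtain ⟨hyT1, hyac, hycb⟩ := hseg y hy
      apply hRcar
      apply subset_closure
      refine ⟨hyT1, fun hyT2 => ?_⟩
      have hq := cr_quad a c w c b y
      rw [cr_self1 c b, mul_zero, add_zero] at hq
      have hcba : cr c b a < 0 := by
        have e1 : cr c b a = -cr c a b := cr_swap23 c a b
        have e2 : cr c a b = cr a b c := cr_rot c a b
        linarith
      have t1 : 0 ≤ cr c w y * cr c b a := by nlinarith [hyT2.2.1]
      have t2 : 0 < cr a c y * cr c b w := mul_pos_of_neg_of_neg hyac hw2'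
      have t3 : cr a c w * cr c b y ≤ 0 := by nlinarith
      linarith
    · -- w on line a c, beyond a: segment a c ⊆ segment w c
      obtain ⟨s, hs⟩ := line_param hac hE
      have hw1val : cr b a w = s * cr b a c := by
        rw [hs, cr_combo, cr_self2 b a]; ring
      have hbac : cr b a c = -cr a b c := cr_swap a b c
      have hslt : s < 0 := by nlinarith
      have hac_sub : segment ℝ a c ⊆ segment ℝ w c := by
        intro x hx
        rw [segment_eq_image ℝ a c] at hx
        obtain ⟨u, ⟨hu0, hu1⟩, hxeq⟩ := hx
        replace hxeq : x = (1 - u) • a + u • c := hxeq.symm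
        have h1s : (1:ℝ) - s ≠ 0 := by intro h; rw [sub_eq_zero] at h; linarith
        refine ⟨(1 - u) / (1 - s), (u - s) / (1 - s),
          div_nonneg (by linarith) (by linarith),
          div_nonneg (by linarith) (by linarith), by field_simp; ring, ?_⟩
        rw [hxeq, hs]
        apply Prod.ext <;>
          simp only [Prod.fst_add, Prod.snd_add, Prod.smul_fst, Prod.smul_snd, smul_eq_mul] <;>
          field_simp <;> ring
      set K : Set (ℝ × ℝ) :=
        segment ℝ w a ∪ segment ℝ w c ∪ segment ℝ v a ∪ segment ℝ v c with hKdef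
      have hK : K ⊆ P.carrier := by
        rintro y (((h | h) | h) | h)
        exacts [hwa h, hwc h, hva h, hvc h]
      have hfr : frontier (T a c v) ⊆ K := by
        intro x hx
        rcases T_frontier hD hx with (h | h) | h
        · exact Or.inl (Or.inl (Or.inr (hac_sub h)))
        · exact Or.inr (segment_symm ℝ c v ▸ h)
        · exact Or.inl (Or.inr h)
      have hRcar : T a c v ⊆ P.carrier := enclosed P (T_bounded hD) hfr hK
      exact hvb fun y hy => hRcar (hseg y hy).1
    · -- w strictly on the opposite side of line ac from v: R = T a c v ∪ T c a w
      have hD2 : cr c a w < 0 := by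
        have := cr_swap a c w
        linarith
      set K : Set (ℝ × ℝ) :=
        segment ℝ w a ∪ segment ℝ w c ∪ segment ℝ v a ∪ segment ℝ v c with hKdef
      have hK : K ⊆ P.carrier := by
        rintro y (((h | h) | h) | h)
        exacts [hwa h, hwc h, hva h, hvc h]
      set R : Set (ℝ × ℝ) := T a c v ∪ T c a w with hR
      have hRb : Bornology.IsBounded R := (T_bounded hD).union (T_bounded hD2)
      have hfr : frontier R ⊆ K := by
        intro x hx
        have hOsub : {y : ℝ × ℝ | cr c v y < 0 ∧ cr v a y < 0 ∧ cr a w y < 0 ∧ cr w c y < 0}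
            ⊆ R := by
          intro y hy
          rcases le_or_gt (cr a c y) 0 with h | h
          · exact Or.inl ⟨h, hy.1.le, hy.2.1.le⟩
          · refine Or.inr ⟨?_, hy.2.2.1.le, hy.2.2.2.le⟩
            have := cr_swap a c y
            linarith
        have hOopen : IsOpen {y : ℝ × ℝ |
            cr c v y < 0 ∧ cr v a y < 0 ∧ cr a w y < 0 ∧ cr w c y < 0} := by
          have o1 := isOpen_lt (continuous_cr c v) (continuous_const (y := (0:ℝ)))
          have o2 := isOpen_lt (continuous_cr v a) (continuous_const (y := (0:ℝ)))
          have o3 := isOpen_lt (continuous_cr a w) (continuous_const (y := (0:ℝ)))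
          have o4 := isOpen_lt (continuous_cr w c) (continuous_const (y := (0:ℝ)))
          have : {y : ℝ × ℝ | cr c v y < 0 ∧ cr v a y < 0 ∧ cr a w y < 0 ∧ cr w c y < 0}
              = {y : ℝ × ℝ | cr c v y < 0} ∩ ({y | cr v a y < 0}
                ∩ ({y | cr a w y < 0} ∩ {y | cr w c y < 0})) := by
            ext z; simp only [Set.mem_setOf_eq, Set.mem_inter_iff]
          rw [this]; exact o1.inter (o2.inter (o3.inter o4))
        have hseg_ac : ∀ z, z ∈ frontier R → z ∈ segment ℝ a c → z ∈ K := by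
          intro z hzf hz
          rw [segment_eq_image ℝ a c] at hz
          obtain ⟨u, ⟨hu0, hu1⟩, hzeq⟩ := hz
          replace hzeq : z = (1 - u) • a + u • c := hzeq.symm
          rcases eq_or_lt_of_le hu0 with h | h
          · have : z = a := by rw [hzeq, ← h]; norm_num
            exact Or.inl (Or.inr (this ▸ right_mem_segment ℝ v a))
          rcases eq_or_lt_of_le hu1 with h' | h'
          · have : z = c := by rw [hzeq, h']; norm_num
            exact Or.inr (this ▸ right_mem_segment ℝ v c)
          · exfalso
            have hzO : z ∈ {y : ℝ × ℝ |
                cr c v y < 0 ∧ cr v a y < 0 ∧ cr a w y < 0 ∧ cr w c y < 0} := by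
              have e1 : cr c v z = (1 - u) * cr a c v := by
                rw [hzeq, cr_combo, cr_self1 c v, ← cr_rot a c v]; ring
              have e2 : cr v a z = u * cr a c v := by
                rw [hzeq, cr_combo, cr_self2 v a,
                  show cr v a c = cr a c v from cr_rot v a c]; ring
              have e3 : cr a w z = u * cr c a w := by
                rw [hzeq, cr_combo, cr_self1 a w,
                  show cr a w c = cr c a w from by rw [cr_rot a w c, cr_rot w c a]]; ring
              have e4 : cr w c z = (1 - u) * cr c a w := by
                rw [hzeq, cr_combo, cr_self2 w c,
                  show cr w c a = cr c a w from cr_rot w c a]; ring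
              refine ⟨?_, ?_, ?_, ?_⟩
              · rw [e1]; nlinarith
              · rw [e2]; nlinarith
              · rw [e3]; nlinarith
              · rw [e4]; nlinarith
            exact hzf.2 (interior_maximal hOsub hOopen hzO)
        rcases frontier_union_subset _ _ hx with h | h
        · rcases T_frontier hD h.1 with (h' | h') | h'
          · exact hseg_ac _ hx h'
          · exact Or.inr (segment_symm ℝ c v ▸ h')
          · exact Or.inl (Or.inr h')
        · rcases T_frontier hD2 h.2 with (h' | h') | h'
          · exact hseg_ac _ hx (segment_symm ℝ c a ▸ h')
          · exact Or.inl (Or.inl (Or.inl (segment_symm ℝ a w ▸ h')))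
          · exact Or.inl (Or.inl (Or.inr h'))
      have hRcar : R ⊆ P.carrier := enclosed P hRb hfr hK
      exact hvb fun y hy => hRcar (Or.inl (hseg y hy).1)
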